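/- Let (E m)_{m ∈ ℕ} be a family of real normed vector spaces with E 0 = ℝ, and let t ∈ T₁ (so t 0 = 1 and (‖t m‖²)_m is summable) be such that t m₀ ≠ 0 for some m₀ ≥ 1. Then for every real number c with 1 ≤ c ≤ ∑'_m ‖t m‖², there exists a unique λ ∈ [0,1] such that ∑'_m λ^{2m} ‖t m‖² = c. (The existence and uniqueness of the normalizing constant λ(t) defined by ‖δ_{λ(t)} t‖² = ψ(‖t‖), which underpins Corollary A.3 on the existence of tensor normalizations, taking c = ψ(‖t‖) ∈ [1, ‖t‖²].) -/

import Mathlib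

/-- Existence and uniqueness of the normalizing constant (underpinning
Corollary A.3): for `t ∈ T₁` with some nonzero level `m₀ ≥ 1` and any
`c ∈ [1, ‖t‖²] = [1, ∑ ‖t m‖²]`, there is a unique `λ ∈ [0,1]` with
`∑ λ^{2m} ‖t m‖² = c`. -/
theorem stmt_4 {E : ℕ → Type*} [∀ m, NormedAddCommGroup (E m)] [∀ m, NormedSpace ℝ (E m)]
    (e0 : E 0 ≃ₗᵢ[ℝ] ℝ) (t : lp E 2) (ht0 : e0 (t 0) = 1)
    (m₀ : ℕ) (hm₀ : 1 ≤ m₀) (htm : t m₀ ≠ 0)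
    (c : ℝ) (hc1 : 1 ≤ c) (hc2 : c ≤ ∑' m, ‖t m‖ ^ 2) :
    ∃! lam : ℝ, lam ∈ Set.Icc (0 : ℝ) 1 ∧ (∑' m, lam ^ (2 * m) * ‖t m‖ ^ 2) = c := by
  have hsum : Summable (fun m => ‖t m‖ ^ 2) := by
    have h := (lp.memℓp t).summable (p := 2) (by norm_num)
    simpa [Real.rpow_natCast] using h
  set g : ℝ → ℝ := fun l => ∑' m, l ^ (2 * m) * ‖t m‖ ^ 2 with hg
  have hsumlam : ∀ l : ℝ, l ∈ Set.Icc (0:ℝ) 1 →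
      Summable (fun m => l ^ (2 * m) * ‖t m‖ ^ 2) := by
    intro l hl
    refine Summable.of_nonneg_of_le (fun m => ?_) (fun m => ?_) hsum
    · exact mul_nonneg (pow_nonneg hl.1 _) (sq_nonneg _)
    · have h1 : l ^ (2 * m) ≤ 1 := pow_le_one₀ hl.1 hl.2
      nlinarith [sq_nonneg ‖t m‖, pow_nonneg hl.1 (2*m)]
  have hnorm0 : ‖t 0‖ = 1 := by
    have := e0.norm_map (t 0)
    rw [ht0] at this
    simpa using this.symm
  have hg0 : g 0 = 1 := by
    show (∑' m, (0:ℝ) ^ (2 * m) * ‖t m‖ ^ 2) = 1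
    rw [tsum_eq_single 0 (by intro m hm; simp [pow_eq_zero_iff, hm])]
    simp [hnorm0]
  have hg1 : g 1 = ∑' m, ‖t m‖ ^ 2 := by simp [hg]
  have hmono : StrictMonoOn g (Set.Icc (0:ℝ) 1) := by
    intro a ha b hb hab
    refine Summable.tsum_lt_tsum (i := m₀) (fun m => ?_) ?_ (hsumlam a ha) (hsumlam b hb)
    · have := pow_le_pow_left₀ ha.1 hab.le (2 * m)
      nlinarith [sq_nonneg ‖t m‖]
    · have h1 : a ^ (2 * m₀) < b ^ (2 * m₀) :=
        pow_lt_pow_left₀ hab ha.1 (by omega)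
      have h2 : (0:ℝ) < ‖t m₀‖ ^ 2 := pow_pos (norm_pos_iff.mpr htm) 2
      nlinarith
  have hcont : ContinuousOn g (Set.Icc (0:ℝ) 1) := by
    rw [continuousOn_iff_continuous_restrict]
    have : (Set.Icc (0:ℝ) 1).domRestrict g =
        fun x : Set.Icc (0:ℝ) 1 => ∑' m, (x:ℝ) ^ (2 * m) * ‖t m‖ ^ 2 := rfl
    rw [this]
    refine continuous_tsum (fun m => by continuity) hsum (fun m x => ?_)
    have h1 : (x:ℝ) ^ (2 * m) ≤ 1 := pow_le_one₀ x.2.1 x.2.2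
    have h2 : (0:ℝ) ≤ (x:ℝ) ^ (2 * m) := pow_nonneg x.2.1 _
    rw [Real.norm_eq_abs, abs_mul, abs_of_nonneg h2, abs_of_nonneg (sq_nonneg _)]
    nlinarith [sq_nonneg ‖t m‖]
  have hsub := intermediate_value_Icc (by norm_num : (0:ℝ) ≤ 1) hcont
  have hcmem : c ∈ Set.Icc (g 0) (g 1) := by
    rw [hg0, hg1]; exact ⟨hc1, hc2⟩
  obtain ⟨lam, hlam, hglam⟩ := hsub hcmem
  exact ⟨lam, ⟨hlam, hglam⟩, fun y ⟨hy, hgy⟩ =>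
    hmono.injOn hy hlam (hgy.trans hglam.symm)⟩
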